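/- The number of n×2 Young tableaux with k horizontal walls in the first column at heights 0 < h_1 < ... < h_k < n equals (1/(2n+1))·∏_{i=1}^{k+1} C(2h_i + 1, h_i - h_{i-1}), where h_0 = 0 and h_{k+1} = n. -/

import Mathlib

/-- chain counting function: `sst b l x` = number of chains `z_0 < … < z_{l-1}`
with `z_t ≤ b + 2t` and `z_{l-1} < x`. -/
def sst (b : ℕ) : ℕ → ℕ → ℕ
  | 0, _ => 1
  | l+1, x => ∑ y ∈ Finset.range (min x (b + 2*l + 1)), sst b l y

lemma sst_zero (b x : ℕ) : sst b 0 x = 1 := rfl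

lemma sst_succ (b l x : ℕ) :
    sst b (l+1) x = ∑ y ∈ Finset.range (min x (b + 2*l + 1)), sst b l y := rfl

lemma sst_one (b x : ℕ) : sst b 1 x = min x (b+1) := by
  simp [sst_succ, sst_zero]

/-- hockey stick -/
lemma hockey (l m : ℕ) : ∑ y ∈ Finset.range m, Nat.choose y l = m.choose (l+1) := by
  induction m with
  | zero => simp
  | succ m ih => rw [Finset.sum_range_succ, ih, Nat.choose_succ_succ' m l]; omega

/-- closed form for `sst`. -/
lemma sst_closed (b : ℕ) : ∀ l x, sst b l x + (min x (b+2*l-1)).choose (b+l+1)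
    = (min x (b+2*l-1)).choose l := by
  intro l
  induction l with
  | zero =>
    intro x
    have h1 : min x (b-1) < b+1 := by omega
    simp only [sst_zero, Nat.choose_zero_right]
    have : (min x (b+2*0-1)) = min x (b-1) := by omega
    rw [this, Nat.choose_eq_zero_of_lt h1]
  | succ l ih =>
    intro x
    have hb : b + 2*(l+1) - 1 = b + 2*l + 1 := by omega
    have hb2 : b + (l+1) + 1 = b + l + 2 := by omega
    rw [hb, hb2]
    induction x with
    | zero =>
      simp [sst_succ, Nat.choose_zero_succ]
    | succ x ihx =>
      by_cases hx : x < b + 2*l + 1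
      · have hmx : min (x+1) (b+2*l+1) = x+1 := by omega
        have hmx' : min x (b+2*l+1) = x := by omega
        rw [hmx]
        rw [hmx'] at ihx
        have hsum : sst b (l+1) (x+1) = sst b (l+1) x + sst b l x := by
          rw [sst_succ, sst_succ, hmx, hmx', Finset.sum_range_succ]
        rw [hsum]
        have hp1 : (x+1).choose (b+l+2) = x.choose (b+l+1) + x.choose (b+l+2) :=
          Nat.choose_succ_succ x (b+l+1)
        have hp2 : (x+1).choose (l+1) = x.choose l + x.choose (l+1) :=
          Nat.choose_succ_succ x l
        rw [hp1, hp2]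
        have key : sst b l x + x.choose (b+l+1) = x.choose l := by
          rcases Nat.eq_zero_or_pos l with hl | hl
          · subst hl
            have : x.choose (b+1) = 0 := Nat.choose_eq_zero_of_lt (by omega)
            simp [sst_zero, this]
          · have hB : b + 2*l - 1 + 1 = b + 2*l := by omega
            by_cases hxB : x ≤ b + 2*l - 1
            · have := ih x
              rwa [min_eq_left hxB] at this
            · -- x = b + 2l
              have hxeq : x = b + 2*l := by omega
              have := ih x
              rw [min_eq_right (by omega)] at this
              subst hxeq
              set B := b + 2*l - 1 with hBdef
              have hBB : b + 2*l = B + 1 := by omega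
              rw [hBB]
              have hq1 : (B+1).choose (b+l+1) = B.choose (b+l) + B.choose (b+l+1) :=
                Nat.choose_succ_succ B (b+l)
              have hq2 : (B+1).choose l = B.choose (l-1) + B.choose l := by
                obtain ⟨l', rfl⟩ : ∃ l', l = l' + 1 := ⟨l - 1, by omega⟩
                simpa using Nat.choose_succ_succ B l'
              have hsymm : B.choose (b+l) = B.choose (l-1) := by
                have h1 : b + l ≤ B := by omega
                have h2 : B - (b+l) = l - 1 := by omega
                rw [← h2]
                exact (Nat.choose_symm h1).symm
              -- `this` after hBB-rewriting of min-arg:  sst b l (B+1) + B.choose (b+l+1) = B.choose l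
              rw [hBB] at this
              omega
        omega
      · have hmx : min (x+1) (b+2*l+1) = b+2*l+1 := by omega
        have hmx' : min x (b+2*l+1) = b+2*l+1 := by omega
        rw [hmx]
        rw [hmx'] at ihx
        have : sst b (l+1) (x+1) = sst b (l+1) x := by
          rw [sst_succ, sst_succ, hmx, hmx']
        omega

/-- the saturated value -/
lemma sst_sat (b l : ℕ) : sst b l (b+2*l-1) + (b+2*l-1).choose (b+l+1) = (b+2*l-1).choose l := by
  have := sst_closed b l (b+2*l-1)
  simpa using this

/-- key identity: `(2n+1) * A(g,d) = (2g+1) * C(2n+1, d)` where `n = g + d`. -/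
lemma sst_sat_eq (g d : ℕ) (hd : 1 ≤ d) :
    (2*(g+d)+1) * sst (2*g) d (2*g+2*d-1) = (2*g+1) * Nat.choose (2*(g+d)+1) d := by
  have hclosed := sst_sat (2*g) d
  rcases Nat.lt_or_ge d 2 with hd2 | hd2
  · -- d = 1
    obtain rfl : d = 1 := by omega
    have h0 : (2*g+2*1-1).choose (2*g+1+1) = 0 := Nat.choose_eq_zero_of_lt (by omega)
    have h1 : (2*g+2*1-1) = 2*g+1 := by omega
    rw [h0] at hclosed
    have hs : sst (2*g) 1 (2*g+2*1-1) = 2*g+1 := by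
      rw [h1] at hclosed ⊢
      simpa using hclosed
    rw [hs, Nat.choose_one_right]
    ring
  · obtain ⟨e, rfl⟩ : ∃ e, d = e + 2 := ⟨d - 2, by omega⟩
    set M := 2*g+2*e+3 with hM
    have hMeq : 2*g+2*(e+2)-1 = M := by omega
    have hMe : M - e = 2*g+e+3 := by omega
    have hMe1 : M - (e+1) = 2*g+e+2 := by omega
    have hsymm : M.choose (2*g+(e+2)+1) = M.choose e := by
      have h1 : M - (2*g+e+3) = e := by omega
      have := Nat.choose_symm (n := M) (k := 2*g+e+3) (by omega)
      rw [h1] at this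
      rw [show 2*g+(e+2)+1 = 2*g+e+3 by omega, ← this]
    rw [hMeq, hsymm] at hclosed
    -- hclosed : sst (2g) (e+2) M' + C(M,e) = C(M,e+2)   (with arg 2*g+2*(e+2)-1 rewritten)
    have hD : (2*(g+(e+2))+1).choose (e+2)
        = M.choose e + 2 * M.choose (e+1) + M.choose (e+2) := by
      have p1 : (M+2).choose (e+2) = (M+1).choose (e+1) + (M+1).choose (e+2) :=
        Nat.choose_succ_succ (M+1) (e+1)
      have p2 : (M+1).choose (e+1) = M.choose e + M.choose (e+1) :=
        Nat.choose_succ_succ M e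
      have p3 : (M+1).choose (e+2) = M.choose (e+1) + M.choose (e+2) :=
        Nat.choose_succ_succ M (e+1)
      rw [show 2*(g+(e+2))+1 = M+2 by omega, p1, p2, p3]
      ring
    have R1 : M.choose (e+1) * (e+1) = M.choose e * (2*g+e+3) := by
      have := Nat.choose_succ_right_eq M e
      rwa [hMe] at this
    have R2 : M.choose (e+2) * (e+2) = M.choose (e+1) * (2*g+e+2) := by
      have := Nat.choose_succ_right_eq M (e+1)
      rwa [hMe1] at this
    -- move to ℤ
    set s := sst (2*g) (e+2) (2*g+2*(e+2)-1) with hs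
    set A := M.choose e
    set B := M.choose (e+1)
    set Cc := M.choose (e+2)
    set D := (2*(g+(e+2))+1).choose (e+2)
    have hcZ : (s : ℤ) + A = Cc := by exact_mod_cast hclosed
    have hDZ : (D : ℤ) = A + 2*B + Cc := by exact_mod_cast hD
    have R1Z : (B : ℤ) * (e+1) = A * (2*(g:ℤ)+e+3) := by exact_mod_cast R1
    have R2Z : (Cc : ℤ) * (e+2) = B * (2*(g:ℤ)+e+2) := by exact_mod_cast R2
    have key : ((e:ℤ)+1)*((e:ℤ)+2)*((2*(g:ℤ)+2*e+5) * s)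
        = ((e:ℤ)+1)*((e:ℤ)+2)*((2*(g:ℤ)+1) * D) := by
      linear_combination ((e:ℤ)+1)*((e:ℤ)+2)*(2*(g:ℤ)+2*e+5) * hcZ
        - ((e:ℤ)+1)*((e:ℤ)+2)*(2*(g:ℤ)+1) * hDZ
        + (2*(e:ℤ)+2)*((e:ℤ)+2) * R1Z + (2*(e:ℤ)+4)*((e:ℤ)+1) * R2Z
    have hne : ((e:ℤ)+1)*((e:ℤ)+2) ≠ 0 := by positivity
    have key2 : (2*(g:ℤ)+2*e+5) * s = (2*(g:ℤ)+1) * D := by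
      have := mul_left_cancel₀ hne key
      exact this
    have : ((2*(g+(e+2))+1) * sst (2*g) (e+2) (2*g+2*(e+2)-1) : ℤ)
        = ((2*g+1) * D : ℕ) := by push_cast; linarith [key2]
    exact_mod_cast this


def IsTab (W : ℕ → Prop) (M : ℕ) (f : Fin M × Fin 2 ≃ Fin (2*M)) : Prop :=
  (∀ i : Fin M, f (i, 0) < f (i, 1)) ∧
  (∀ i j : Fin M, (i : ℕ) + 1 = (j : ℕ) → f (i, 1) < f (j, 1)) ∧
  (∀ i j : Fin M, (i : ℕ) + 1 = (j : ℕ) → ¬ W (j : ℕ) → f (i, 0) < f (j, 0))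

lemma top_eq {W : ℕ → Prop} {M : ℕ} (f : Fin (M+1) × Fin 2 ≃ Fin (2*(M+1)))
    (hf : IsTab W (M+1) f) : (f (⟨M, Nat.lt_succ_self M⟩, 1) : ℕ) = 2*M+1 := by
  by_contra hne
  set t : Fin (2*(M+1)) := ⟨2*M+1, by omega⟩ with ht
  obtain ⟨⟨i, c⟩, hic⟩ : ∃ p, f p = t := ⟨f.symm t, f.apply_symm_apply t⟩
  rcases c with ⟨cv, hcv⟩
  interval_cases cv
  · have h1 := hf.1 i
    rw [show ((⟨0, hcv⟩ : Fin 2)) = 0 from rfl] at hic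
    rw [hic] at h1
    have := (f (i, 1)).isLt
    rw [Fin.lt_def] at h1
    simp only [ht] at h1
    omega
  · by_cases him : (i : ℕ) = M
    · apply hne
      have : i = ⟨M, Nat.lt_succ_self M⟩ := Fin.ext him
      rw [← this]
      have : (⟨1, hcv⟩ : Fin 2) = 1 := rfl
      rw [← this, hic]
    · have hiM : (i : ℕ) + 1 < M + 1 := by have := i.isLt; omega
      have h2 := hf.2.1 i ⟨(i : ℕ) + 1, hiM⟩ rfl
      rw [show ((⟨1, hcv⟩ : Fin 2)) = 1 from rfl] at hic
      rw [hic, Fin.lt_def] at h2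
      have := (f (⟨(i : ℕ) + 1, hiM⟩, 1)).isLt
      simp only [ht] at h2
      omega

def liftv (x' v : ℕ) : ℕ := if v < x' then v else v + 1
def dropv (x' mm w : ℕ) : ℕ := min (if w < x' then w else w - 1) (2*mm+1)

lemma liftv_lt_iff (x' a b : ℕ) : liftv x' a < liftv x' b ↔ a < b := by
  simp only [liftv]; split_ifs <;> omega

lemma liftv_ne (x' a : ℕ) : liftv x' a ≠ x' := by
  simp only [liftv]; split_ifs <;> omega

lemma liftv_le {a mm : ℕ} (x' : ℕ) (h : a ≤ 2*mm+1) : liftv x' a ≤ 2*mm+2 := by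
  simp only [liftv]; split_ifs <;> omega

lemma liftv_lt_x' (x' a : ℕ) : liftv x' a < x' ↔ a < x' := by
  simp only [liftv]; split_ifs <;> omega

lemma dropv_liftv {v mm : ℕ} (x' : ℕ) (h : v ≤ 2*mm+1) : dropv x' mm (liftv x' v) = v := by
  simp only [liftv, dropv]; split_ifs <;> omega

lemma liftv_dropv {w mm x' : ℕ} (h1 : w ≠ x') (h2 : w ≤ 2*mm+2) (h3 : x' ≤ 2*mm+2) :
    liftv x' (dropv x' mm w) = w := by
  simp only [liftv, dropv]; split_ifs <;> omega

lemma dropv_lt_dropv {a b mm x' : ℕ} (ha : a ≠ x') (hb : b ≠ x') (ha2 : a ≤ 2*mm+2)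
    (hb2 : b ≤ 2*mm+2) (h3 : x' ≤ 2*mm+2) (hab : a < b) : dropv x' mm a < dropv x' mm b := by
  simp only [dropv]; split_ifs <;> omega

lemma dropv_lt_x' {w mm x' : ℕ} (h1 : w ≠ x') (h2 : w ≤ 2*mm+2) (h3 : x' ≤ 2*mm+2) :
    dropv x' mm w < x' ↔ w < x' := by
  simp only [dropv]; split_ifs <;> omega

section InsDel

variable {m : ℕ}

/-- insertion of a new top row with left value `x'` (and right value `2m+3`). -/
def insMap (f' : Fin (m+1) × Fin 2 ≃ Fin (2*(m+1))) (x' : ℕ) :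
    Fin (m+2) × Fin 2 → Fin (2*(m+2)) := fun p =>
  if hi : (p.1 : ℕ) < m + 1 then
    ⟨liftv x' (f' (⟨p.1, hi⟩, p.2)),
      by have h := (f' (⟨p.1, hi⟩, p.2)).isLt
         have h2 : ((f' (⟨p.1, hi⟩, p.2)) : ℕ) ≤ 2*m+1 := by omega
         have := liftv_le x' h2; omega⟩
  else if p.2 = 0 then ⟨min x' (2*m+2), by omega⟩ else ⟨2*m+3, by omega⟩

lemma insMap_val_lo (f' : Fin (m+1) × Fin 2 ≃ Fin (2*(m+1))) (x' : ℕ)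
    (p : Fin (m+2) × Fin 2) (hp : (p.1 : ℕ) < m+1) :
    (insMap f' x' p : ℕ) = liftv x' (f' (⟨p.1, hp⟩, p.2)) := by
  simp only [insMap, dif_pos hp]

lemma insMap_val_hi0 (f' : Fin (m+1) × Fin 2 ≃ Fin (2*(m+1))) (x' : ℕ)
    (p : Fin (m+2) × Fin 2) (hp : ¬ ((p.1 : ℕ) < m+1)) (hc : p.2 = 0) :
    (insMap f' x' p : ℕ) = min x' (2*m+2) := by
  simp only [insMap, dif_neg hp, if_pos hc]

lemma insMap_val_hi1 (f' : Fin (m+1) × Fin 2 ≃ Fin (2*(m+1))) (x' : ℕ)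
    (p : Fin (m+2) × Fin 2) (hp : ¬ ((p.1 : ℕ) < m+1)) (hc : ¬ (p.2 = 0)) :
    (insMap f' x' p : ℕ) = 2*m+3 := by
  simp only [insMap, dif_neg hp, if_neg hc]

lemma insMap_injective (f' : Fin (m+1) × Fin 2 ≃ Fin (2*(m+1))) (x' : ℕ)
    (hx' : x' ≤ 2*m+2) : Function.Injective (insMap f' x') := by
  intro p q hpq
  have hv : (insMap f' x' p : ℕ) = (insMap f' x' q : ℕ) := by rw [hpq]
  by_cases hp : (p.1 : ℕ) < m + 1 <;> by_cases hq : (q.1 : ℕ) < m + 1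
  · rw [insMap_val_lo f' x' p hp, insMap_val_lo f' x' q hq] at hv
    have h1 : ((f' (⟨p.1, hp⟩, p.2)) : ℕ) = ((f' (⟨q.1, hq⟩, q.2)) : ℕ) := by
      have t1 := liftv_lt_iff x' (f' (⟨p.1, hp⟩, p.2)) (f' (⟨q.1, hq⟩, q.2))
      have t2 := liftv_lt_iff x' (f' (⟨q.1, hq⟩, q.2)) (f' (⟨p.1, hp⟩, p.2))
      omega
    have h2 := f'.injective (Fin.ext h1)
    rw [Prod.mk.injEq] at h2
    have h3 : (p.1 : ℕ) = (q.1 : ℕ) := by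
      have := congrArg Fin.val h2.1; simpa using this
    exact Prod.ext (Fin.ext h3) h2.2
  · exfalso
    rw [insMap_val_lo f' x' p hp] at hv
    have hb : ((f' (⟨p.1, hp⟩, p.2)) : ℕ) ≤ 2*m+1 := by
      have := (f' (⟨p.1, hp⟩, p.2)).isLt; omega
    have h5 := liftv_ne x' (f' (⟨p.1, hp⟩, p.2))
    have h6 := liftv_le x' hb
    by_cases hc : q.2 = 0
    · rw [insMap_val_hi0 f' x' q hq hc] at hv; omega
    · rw [insMap_val_hi1 f' x' q hq hc] at hv; omega
  · exfalso
    rw [insMap_val_lo f' x' q hq] at hv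
    have hb : ((f' (⟨q.1, hq⟩, q.2)) : ℕ) ≤ 2*m+1 := by
      have := (f' (⟨q.1, hq⟩, q.2)).isLt; omega
    have h5 := liftv_ne x' (f' (⟨q.1, hq⟩, q.2))
    have h6 := liftv_le x' hb
    by_cases hc : p.2 = 0
    · rw [insMap_val_hi0 f' x' p hp hc] at hv; omega
    · rw [insMap_val_hi1 f' x' p hp hc] at hv; omega
  · have h1 : (p.1 : ℕ) = (q.1 : ℕ) := by have := p.1.isLt; have := q.1.isLt; omega
    by_cases hc : p.2 = 0 <;> by_cases hd : q.2 = 0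
    · exact Prod.ext (Fin.ext h1) (hc.trans hd.symm)
    · exfalso
      rw [insMap_val_hi0 f' x' p hp hc, insMap_val_hi1 f' x' q hq hd] at hv; omega
    · exfalso
      rw [insMap_val_hi1 f' x' p hp hc, insMap_val_hi0 f' x' q hq hd] at hv; omega
    · have h2 : p.2 = q.2 := by
        rw [Fin.eq_one_of_ne_zero p.2 hc, Fin.eq_one_of_ne_zero q.2 hd]
      exact Prod.ext (Fin.ext h1) h2

noncomputable def insEquiv (f' : Fin (m+1) × Fin 2 ≃ Fin (2*(m+1))) (x' : ℕ)
    (hx' : x' ≤ 2*m+2) : Fin (m+2) × Fin 2 ≃ Fin (2*(m+2)) :=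
  Equiv.ofBijective (insMap f' x')
    ((Fintype.bijective_iff_injective_and_card _).2
      ⟨insMap_injective f' x' hx', by simp; omega⟩)

lemma insEquiv_lo (f' : Fin (m+1) × Fin 2 ≃ Fin (2*(m+1))) (x' : ℕ) (hx' : x' ≤ 2*m+2)
    (i : Fin (m+2)) (hi : (i : ℕ) < m+1) (c : Fin 2) :
    ((insEquiv f' x' hx') (i, c) : ℕ) = liftv x' (f' (⟨i, hi⟩, c)) :=
  insMap_val_lo f' x' (i, c) hi

lemma insEquiv_left (f' : Fin (m+1) × Fin 2 ≃ Fin (2*(m+1))) (x' : ℕ) (hx' : x' ≤ 2*m+2) :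
    ((insEquiv f' x' hx') (⟨m+1, Nat.lt_succ_self (m+1)⟩, 0) : ℕ) = x' := by
  rw [show ((insEquiv f' x' hx') (⟨m+1, Nat.lt_succ_self (m+1)⟩, 0) : ℕ)
      = (insMap f' x' (⟨m+1, Nat.lt_succ_self (m+1)⟩, 0) : ℕ) from rfl]
  rw [insMap_val_hi0 f' x' _ (by simp) rfl]
  omega

lemma insEquiv_top (f' : Fin (m+1) × Fin 2 ≃ Fin (2*(m+1))) (x' : ℕ) (hx' : x' ≤ 2*m+2) :
    ((insEquiv f' x' hx') (⟨m+1, Nat.lt_succ_self (m+1)⟩, 1) : ℕ) = 2*m+3 := by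
  rw [show ((insEquiv f' x' hx') (⟨m+1, Nat.lt_succ_self (m+1)⟩, 1) : ℕ)
      = (insMap f' x' (⟨m+1, Nat.lt_succ_self (m+1)⟩, 1) : ℕ) from rfl]
  rw [insMap_val_hi1 f' x' _ (by simp) (by simp)]

end InsDel

section Del

variable {m : ℕ}

def cellUp (p : Fin (m+1) × Fin 2) : Fin (m+2) × Fin 2 :=
  (⟨(p.1 : ℕ), by have := p.1.isLt; omega⟩, p.2)

def delMap (f : Fin (m+2) × Fin 2 ≃ Fin (2*(m+2))) (x' : ℕ) :
    Fin (m+1) × Fin 2 → Fin (2*(m+1)) :=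
  fun p => ⟨dropv x' m (f (cellUp p)), by simp only [dropv]; omega⟩

lemma delMap_val (f : Fin (m+2) × Fin 2 ≃ Fin (2*(m+2))) (x' : ℕ) (p : Fin (m+1) × Fin 2) :
    (delMap f x' p : ℕ) = dropv x' m (f (cellUp p)) := rfl

lemma delMap_injective (f : Fin (m+2) × Fin 2 ≃ Fin (2*(m+2))) (x' : ℕ) (hx' : x' ≤ 2*m+2)
    (hgood : ∀ p : Fin (m+1) × Fin 2, (f (cellUp p) : ℕ) ≠ x' ∧ (f (cellUp p) : ℕ) ≤ 2*m+2) :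
    Function.Injective (delMap f x') := by
  intro p q hpq
  have hv : dropv x' m (f (cellUp p)) = dropv x' m (f (cellUp q)) := by
    rw [← delMap_val, ← delMap_val, hpq]
  have h1 : (f (cellUp p) : ℕ) = (f (cellUp q) : ℕ) := by
    rcases lt_trichotomy ((f (cellUp p)) : ℕ) ((f (cellUp q)) : ℕ) with h | h | h
    · have := dropv_lt_dropv (hgood p).1 (hgood q).1 (hgood p).2 (hgood q).2 hx' h; omega
    · exact h
    · have := dropv_lt_dropv (hgood q).1 (hgood p).1 (hgood q).2 (hgood p).2 hx' h; omega
  have h2 := f.injective (Fin.ext h1)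
  simp only [cellUp, Prod.mk.injEq] at h2
  have h3 : (p.1 : ℕ) = (q.1 : ℕ) := by
    have := congrArg Fin.val h2.1; simpa using this
  exact Prod.ext (Fin.ext h3) h2.2

noncomputable def delEquiv (f : Fin (m+2) × Fin 2 ≃ Fin (2*(m+2))) (x' : ℕ) (hx' : x' ≤ 2*m+2)
    (hgood : ∀ p : Fin (m+1) × Fin 2, (f (cellUp p) : ℕ) ≠ x' ∧ (f (cellUp p) : ℕ) ≤ 2*m+2) :
    Fin (m+1) × Fin 2 ≃ Fin (2*(m+1)) :=
  Equiv.ofBijective (delMap f x')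
    ((Fintype.bijective_iff_injective_and_card _).2
      ⟨delMap_injective f x' hx' hgood, by simp; omega⟩)

lemma delEquiv_val (f : Fin (m+2) × Fin 2 ≃ Fin (2*(m+2))) (x' : ℕ) (hx' : x' ≤ 2*m+2)
    (hgood : ∀ p : Fin (m+1) × Fin 2, (f (cellUp p) : ℕ) ≠ x' ∧ (f (cellUp p) : ℕ) ≤ 2*m+2)
    (p : Fin (m+1) × Fin 2) :
    ((delEquiv f x' hx' hgood) p : ℕ) = dropv x' m (f (cellUp p)) := rfl

/-- goodness from being a tableau with prescribed top-left value. -/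
lemma good_of_tab {W : ℕ → Prop} (f : Fin (m+2) × Fin 2 ≃ Fin (2*(m+2)))
    (hf : IsTab W (m+2) f) (x' : ℕ)
    (hval : (f (⟨m+1, Nat.lt_succ_self (m+1)⟩, 0) : ℕ) = x') :
    ∀ p : Fin (m+1) × Fin 2, (f (cellUp p) : ℕ) ≠ x' ∧ (f (cellUp p) : ℕ) ≤ 2*m+2 := by
  intro p
  have hrow : ((cellUp p).1 : ℕ) < m + 1 := by
    have := p.1.isLt; simp only [cellUp]; omega
  constructor
  · intro hcon
    have : f (cellUp p) = f (⟨m+1, Nat.lt_succ_self (m+1)⟩, 0) := Fin.ext (by rw [hcon, hval])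
    have := f.injective this
    have := congrArg (fun z => ((z.1 : Fin (m+2)) : ℕ)) this
    simp only [cellUp] at this
    omega
  · have htop := top_eq f hf
    have hlt := (f (cellUp p)).isLt
    by_contra hcon
    have hval3 : (f (cellUp p) : ℕ) = 2*m+3 := by omega
    have : f (cellUp p) = f (⟨m+1, Nat.lt_succ_self (m+1)⟩, 1) := Fin.ext (by
      rw [hval3, htop]; omega)
    have := f.injective this
    have := congrArg (fun z => ((z.1 : Fin (m+2)) : ℕ)) this
    simp only [cellUp] at this
    omega

end Del

lemma fiber_card (W : ℕ → Prop) (m x' : ℕ) (hx' : x' ≤ 2*m+2) :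
    Nat.card {f : Fin (m+2) × Fin 2 ≃ Fin (2*(m+2)) //
        IsTab W (m+2) f ∧ (f (⟨m+1, Nat.lt_succ_self (m+1)⟩, 0) : ℕ) = x'}
    = Nat.card {f' : Fin (m+1) × Fin 2 ≃ Fin (2*(m+1)) //
        IsTab W (m+1) f' ∧ (¬ W (m+1) → (f' (⟨m, Nat.lt_succ_self m⟩, 0) : ℕ) < x')} := by
  apply Nat.card_congr
  refine ⟨fun T => ⟨delEquiv T.1 x' hx' (good_of_tab T.1 T.2.1 x' T.2.2), ?_⟩,
    fun T' => ⟨insEquiv T'.1 x' hx', ?_⟩, ?_, ?_⟩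
  · -- deleted tableau is a tableau with the tail condition
    obtain ⟨f, hf, hval⟩ := T
    have hgood := good_of_tab f hf x' hval
    set g := delEquiv f x' hx' hgood with hg
    have gval : ∀ p : Fin (m+1) × Fin 2, (g p : ℕ) = dropv x' m (f (cellUp p)) :=
      fun p => rfl
    have key : ∀ p q : Fin (m+1) × Fin 2, f (cellUp p) < f (cellUp q) → g p < g q := by
      intro p q hpq
      rw [Fin.lt_def, gval p, gval q]
      exact dropv_lt_dropv (hgood p).1 (hgood q).1 (hgood p).2 (hgood q).2 hx'
        (by rw [Fin.lt_def] at hpq; exact hpq)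
    refine ⟨⟨?_, ?_, ?_⟩, ?_⟩
    · intro i
      apply key (i, 0) (i, 1)
      exact hf.1 ⟨(i : ℕ), by have := i.isLt; omega⟩
    · intro i j hij
      apply key (i, 1) (j, 1)
      exact hf.2.1 ⟨(i : ℕ), by have := i.isLt; omega⟩ ⟨(j : ℕ), by have := j.isLt; omega⟩ hij
    · intro i j hij hW
      apply key (i, 0) (j, 0)
      exact hf.2.2 ⟨(i : ℕ), by have := i.isLt; omega⟩ ⟨(j : ℕ), by have := j.isLt; omega⟩
        hij hW
    · intro hW
      rw [gval ⟨⟨m, Nat.lt_succ_self m⟩, 0⟩]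
      rw [dropv_lt_x' (hgood _).1 (hgood _).2 hx']
      have := hf.2.2 ⟨m, by omega⟩ ⟨m+1, Nat.lt_succ_self (m+1)⟩ rfl hW
      rw [Fin.lt_def, hval] at this
      exact this
  · -- inserted tableau is a tableau with top-left value x'
    obtain ⟨f', hf', htail⟩ := T'
    have hbd : ∀ p : Fin (m+1) × Fin 2, ((f' p) : ℕ) ≤ 2*m+1 := by
      intro p; have := (f' p).isLt; omega
    constructor
    · refine ⟨?_, ?_, ?_⟩
      · intro i
        by_cases hi : (i : ℕ) < m+1
        · rw [Fin.lt_def, insEquiv_lo f' x' hx' i hi 0, insEquiv_lo f' x' hx' i hi 1,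
            liftv_lt_iff]
          exact hf'.1 ⟨(i : ℕ), hi⟩
        · have hieq : i = ⟨m+1, Nat.lt_succ_self (m+1)⟩ :=
            Fin.ext (show (i : ℕ) = m+1 by have := i.isLt; omega)
          rw [hieq, Fin.lt_def, insEquiv_left f' x' hx', insEquiv_top f' x' hx']
          omega
      · intro i j hij
        by_cases hj : (j : ℕ) < m+1
        · have hi : (i : ℕ) < m+1 := by omega
          rw [Fin.lt_def, insEquiv_lo f' x' hx' i hi 1, insEquiv_lo f' x' hx' j hj 1,
            liftv_lt_iff]
          exact hf'.2.1 ⟨(i : ℕ), hi⟩ ⟨(j : ℕ), hj⟩ hij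
        · have hjeq : j = ⟨m+1, Nat.lt_succ_self (m+1)⟩ :=
            Fin.ext (show (j : ℕ) = m+1 by have := j.isLt; omega)
          have hi : (i : ℕ) < m+1 := by have := j.isLt; omega
          rw [hjeq, Fin.lt_def, insEquiv_top f' x' hx', insEquiv_lo f' x' hx' i hi 1]
          have := liftv_le x' (hbd (⟨(i : ℕ), hi⟩, 1))
          omega
      · intro i j hij hW
        by_cases hj : (j : ℕ) < m+1
        · have hi : (i : ℕ) < m+1 := by omega
          rw [Fin.lt_def, insEquiv_lo f' x' hx' i hi 0, insEquiv_lo f' x' hx' j hj 0,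
            liftv_lt_iff]
          exact hf'.2.2 ⟨(i : ℕ), hi⟩ ⟨(j : ℕ), hj⟩ hij hW
        · have hjv : (j : ℕ) = m+1 := by have := j.isLt; omega
          have hjeq : j = ⟨m+1, Nat.lt_succ_self (m+1)⟩ :=
            Fin.ext (show (j : ℕ) = m+1 from hjv)
          have hi : (i : ℕ) < m+1 := by omega
          rw [hjeq, Fin.lt_def, insEquiv_left f' x' hx', insEquiv_lo f' x' hx' i hi 0]
          rw [hjv] at hW
          have hlt := htail hW
          have hieq : (⟨(i : ℕ), hi⟩ : Fin (m+1)) = ⟨m, Nat.lt_succ_self m⟩ :=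
            Fin.ext (show (i : ℕ) = m by omega)
          rw [hieq]
          rw [← liftv_lt_x' x' ((f' (⟨m, Nat.lt_succ_self m⟩, 0)) : ℕ)] at hlt
          exact hlt
    · exact insEquiv_left f' x' hx'
  · -- left inverse
    rintro ⟨f, hf, hval⟩
    apply Subtype.ext
    apply Equiv.ext
    intro p
    apply Fin.ext
    set hgood := good_of_tab f hf x' hval with hgooddef
    show ((insEquiv (delEquiv f x' hx' hgood) x' hx') p : ℕ) = (f p : ℕ)
    by_cases hp : (p.1 : ℕ) < m+1
    · have h1 : ((insEquiv (delEquiv f x' hx' hgood) x' hx') p : ℕ)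
          = liftv x' ((delEquiv f x' hx' hgood) (⟨(p.1 : ℕ), hp⟩, p.2)) :=
        insEquiv_lo _ x' hx' p.1 hp p.2
      rw [h1, delEquiv_val]
      set q : Fin (m+1) × Fin 2 := (⟨(p.1 : ℕ), hp⟩, p.2) with hq
      have hcell : cellUp q = p := by
        apply Prod.ext
        · apply Fin.ext; rfl
        · rfl
      rw [hcell]
      exact liftv_dropv (hgood q).1 (hgood q).2 hx'
    · have hp1 : (p.1 : ℕ) = m+1 := by have := p.1.isLt; omega
      by_cases hc : p.2 = 0
      · have hpeq : p = (⟨m+1, Nat.lt_succ_self (m+1)⟩, 0) := Prod.ext (Fin.ext hp1) hc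
        rw [hpeq, insEquiv_left _ x' hx']
        exact hval.symm
      · have hc1 : p.2 = 1 := Fin.eq_one_of_ne_zero p.2 hc
        have hpeq : p = (⟨m+1, Nat.lt_succ_self (m+1)⟩, 1) := Prod.ext (Fin.ext hp1) hc1
        rw [hpeq, insEquiv_top _ x' hx']
        exact (top_eq f hf).symm
  · -- right inverse
    rintro ⟨f', hf', htail⟩
    apply Subtype.ext
    apply Equiv.ext
    intro p
    apply Fin.ext
    show (dropv x' m ((insEquiv f' x' hx') (cellUp p)) : ℕ) = (f' p : ℕ)
    have hi : ((cellUp p).1 : ℕ) < m+1 := by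
      have := p.1.isLt
      simp only [cellUp]
      omega
    have h1 : ((insEquiv f' x' hx') (cellUp p) : ℕ)
        = liftv x' (f' (⟨((cellUp p).1 : ℕ), hi⟩, (cellUp p).2)) :=
      insEquiv_lo f' x' hx' (cellUp p).1 hi (cellUp p).2
    have hcq : ((⟨((cellUp p).1 : ℕ), hi⟩ : Fin (m+1)), (cellUp p).2) = p := by
      apply Prod.ext
      · apply Fin.ext; rfl
      · rfl
    rw [h1, hcq]
    exact dropv_liftv x' (by have := (f' p).isLt; omega)

lemma nat_card_fiber_sum {α : Type*} [Finite α] {n : ℕ} (g : α → Fin n) :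
    Nat.card α = ∑ b : Fin n, Nat.card {a // g a = b} := by
  classical
  calc Nat.card α = Nat.card (Σ b : Fin n, {a // g a = b}) :=
        Nat.card_congr (Equiv.sigmaFiberEquiv g).symm
    _ = ∑ b : Fin n, Nat.card {a // g a = b} := by
        cases nonempty_fintype α
        rw [Nat.card_eq_fintype_card, Fintype.card_sigma]
        exact Finset.sum_congr rfl (fun b _ => (Nat.card_eq_fintype_card).symm)

/-- refined count: tableaux with `m+1` rows whose top-left entry is `< x`. -/
noncomputable def SC (W : ℕ → Prop) (m x : ℕ) : ℕ :=
  Nat.card {f : Fin (m+1) × Fin 2 ≃ Fin (2*(m+1)) //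
    IsTab W (m+1) f ∧ (f (⟨m, Nat.lt_succ_self m⟩, 0) : ℕ) < x}

lemma val_lt_top {W : ℕ → Prop} {m : ℕ} (f : Fin (m+1) × Fin 2 ≃ Fin (2*(m+1)))
    (hf : IsTab W (m+1) f) : (f (⟨m, Nat.lt_succ_self m⟩, 0) : ℕ) < 2*m+1 := by
  have h1 := hf.1 ⟨m, Nat.lt_succ_self m⟩
  rw [Fin.lt_def] at h1
  have h2 := (f (⟨m, Nat.lt_succ_self m⟩, 1)).isLt
  omega

lemma SC_succ (W : ℕ → Prop) (m x : ℕ) :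
    SC W (m+1) x = ∑ y ∈ Finset.range (min x (2*m+3)),
      Nat.card {f' : Fin (m+1) × Fin 2 ≃ Fin (2*(m+1)) //
        IsTab W (m+1) f' ∧ (¬ W (m+1) → (f' (⟨m, Nat.lt_succ_self m⟩, 0) : ℕ) < y)} := by
  classical
  set F : ℕ → ℕ := fun y => Nat.card {f' : Fin (m+1) × Fin 2 ≃ Fin (2*(m+1)) //
        IsTab W (m+1) f' ∧ (¬ W (m+1) → (f' (⟨m, Nat.lt_succ_self m⟩, 0) : ℕ) < y)} with hF
  set S := {f : Fin (m+2) × Fin 2 ≃ Fin (2*(m+2)) //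
      IsTab W (m+2) f ∧ (f (⟨m+1, Nat.lt_succ_self (m+1)⟩, 0) : ℕ) < x} with hS
  have hSC : SC W (m+1) x = Nat.card S := rfl
  set gfun : S → Fin (2*m+3) := fun T => ⟨(T.1 (⟨m+1, Nat.lt_succ_self (m+1)⟩, 0) : ℕ), by
    have h1 := T.2.1.1 ⟨m+1, Nat.lt_succ_self (m+1)⟩
    rw [Fin.lt_def] at h1
    have h2 := (T.1 (⟨m+1, Nat.lt_succ_self (m+1)⟩, 1)).isLt
    omega⟩ with hgfun
  have hpart : Nat.card S = ∑ b : Fin (2*m+3), Nat.card {T : S // gfun T = b} :=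
    nat_card_fiber_sum gfun
  have hfib : ∀ b : Fin (2*m+3), Nat.card {T : S // gfun T = b}
      = if (b : ℕ) < x then Nat.card {f : Fin (m+2) × Fin 2 ≃ Fin (2*(m+2)) //
          IsTab W (m+2) f ∧ (f (⟨m+1, Nat.lt_succ_self (m+1)⟩, 0) : ℕ) = (b : ℕ)} else 0 := by
    intro b
    by_cases hbx : (b : ℕ) < x
    · rw [if_pos hbx]
      refine Nat.card_congr ⟨fun T => ⟨T.1.1, T.1.2.1, ?_⟩,
        fun U => ⟨⟨U.1, U.2.1, by rw [U.2.2]; exact hbx⟩, ?_⟩, ?_, ?_⟩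
      · have := congrArg Fin.val T.2
        exact this
      · apply Fin.ext
        exact U.2.2
      · intro T
        apply Subtype.ext
        apply Subtype.ext
        rfl
      · intro U
        apply Subtype.ext
        rfl
    · rw [if_neg hbx]
      have : IsEmpty {T : S // gfun T = b} := by
        constructor
        intro T
        have h1 := T.1.2.2
        have h2 := congrArg Fin.val T.2
        simp only [hgfun] at h2
        omega
      exact Nat.card_of_isEmpty
  have hfib2 : ∀ b : Fin (2*m+3), Nat.card {T : S // gfun T = b}
      = if (b : ℕ) < x then F (b : ℕ) else 0 := by
    intro b
    rw [hfib b, hF]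
    have hb2 : (b : ℕ) ≤ 2*m+2 := by have := b.isLt; omega
    rw [fiber_card W m (b : ℕ) hb2]
  rw [hSC, hpart]
  have hsum : ∑ b : Fin (2*m+3), Nat.card {T : S // gfun T = b}
      = ∑ y ∈ Finset.range (2*m+3), if y < x then F y else 0 := by
    rw [← Fin.sum_univ_eq_sum_range (fun y => if y < x then F y else 0) (2*m+3)]
    exact Finset.sum_congr rfl (fun b _ => hfib2 b)
  rw [hsum, ← Finset.sum_filter]
  congr 1
  ext y
  simp only [Finset.mem_filter, Finset.mem_range, lt_min_iff]
  tauto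

lemma SC_succ_wall (W : ℕ → Prop) (m x : ℕ) (hW : W (m+1)) :
    SC W (m+1) x = (min x (2*m+3)) * SC W m (2*m+1) := by
  rw [SC_succ]
  have : ∀ y, Nat.card {f' : Fin (m+1) × Fin 2 ≃ Fin (2*(m+1)) //
      IsTab W (m+1) f' ∧ (¬ W (m+1) → (f' (⟨m, Nat.lt_succ_self m⟩, 0) : ℕ) < y)}
      = SC W m (2*m+1) := by
    intro y
    apply Nat.card_congr
    apply Equiv.subtypeEquivRight
    intro f'
    constructor
    · rintro ⟨h1, _⟩
      exact ⟨h1, val_lt_top f' h1⟩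
    · rintro ⟨h1, _⟩
      exact ⟨h1, fun hcon => absurd hW hcon⟩
  calc ∑ y ∈ Finset.range (min x (2*m+3)), _ = ∑ y ∈ Finset.range (min x (2*m+3)),
      SC W m (2*m+1) := Finset.sum_congr rfl (fun y _ => this y)
    _ = (min x (2*m+3)) * SC W m (2*m+1) := by
        rw [Finset.sum_const, Finset.card_range, smul_eq_mul]

lemma SC_succ_nowall (W : ℕ → Prop) (m x : ℕ) (hW : ¬ W (m+1)) :
    SC W (m+1) x = ∑ y ∈ Finset.range (min x (2*m+3)), SC W m y := by
  rw [SC_succ]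
  apply Finset.sum_congr rfl
  intro y _
  apply Nat.card_congr
  apply Equiv.subtypeEquivRight
  intro f'
  constructor
  · rintro ⟨h1, h2⟩
    exact ⟨h1, h2 hW⟩
  · rintro ⟨h1, h2⟩
    exact ⟨h1, fun _ => h2⟩

noncomputable def tabOne : Fin 1 × Fin 2 ≃ Fin (2*(0+1)) where
  toFun p := ⟨(p.2 : ℕ), by have := p.2.isLt; omega⟩
  invFun w := (⟨0, Nat.one_pos⟩, ⟨(w : ℕ), by have := w.isLt; omega⟩)
  left_inv p := by
    apply Prod.ext
    · apply Fin.ext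
      have := p.1.isLt; omega
    · apply Fin.ext; rfl
  right_inv w := by apply Fin.ext; rfl

lemma SC_zero (W : ℕ → Prop) (x : ℕ) : SC W 0 x = min x 1 := by
  rcases Nat.eq_zero_or_pos x with hx | hx
  · subst hx
    have : IsEmpty {f : Fin (0+1) × Fin 2 ≃ Fin (2*(0+1)) //
        IsTab W (0+1) f ∧ (f (⟨0, Nat.lt_succ_self 0⟩, 0) : ℕ) < 0} := by
      constructor
      intro T
      exact absurd T.2.2 (by omega)
    rw [show SC W 0 0 = Nat.card _ from rfl, Nat.card_of_isEmpty]
    omega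
  · have htab : IsTab W (0+1) tabOne := by
      refine ⟨?_, ?_, ?_⟩
      · intro i
        rw [Fin.lt_def]
        show (0 : ℕ) < 1
        omega
      · intro i j hij
        exfalso
        have := j.isLt; omega
      · intro i j hij
        exfalso
        have := j.isLt; omega
    have hval : (tabOne (⟨0, Nat.lt_succ_self 0⟩, 0) : ℕ) < x := by
      show (0 : ℕ) < x
      omega
    haveI : Unique {f : Fin (0+1) × Fin 2 ≃ Fin (2*(0+1)) //
        IsTab W (0+1) f ∧ (f (⟨0, Nat.lt_succ_self 0⟩, 0) : ℕ) < x} := by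
      refine ⟨⟨⟨tabOne, htab, hval⟩⟩, ?_⟩
      rintro ⟨f, hf, hfval⟩
      apply Subtype.ext
      apply Equiv.ext
      intro p
      apply Fin.ext
      have hrow := hf.1 p.1
      rw [Fin.lt_def] at hrow
      have h0 := (f (p.1, 0)).isLt
      have h1 := (f (p.1, 1)).isLt
      show (f p : ℕ) = ((tabOne p : Fin (2*(0+1))) : ℕ)
      have htv : ((tabOne p : Fin (2*(0+1))) : ℕ) = (p.2 : ℕ) := rfl
      rw [htv]
      by_cases hc : p.2 = 0
      · have : p = (p.1, 0) := Prod.ext rfl hc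
        rw [this]
        show (f (p.1, 0) : ℕ) = 0
        omega
      · have hc1 : p.2 = 1 := Fin.eq_one_of_ne_zero p.2 hc
        have : p = (p.1, 1) := Prod.ext rfl hc1
        rw [this]
        show (f (p.1, 1) : ℕ) = 1
        omega
    rw [show SC W 0 x = Nat.card _ from rfl, Nat.card_unique]
    omega


set_option maxHeartbeats 2000000

/-- The number of n×2 Young tableaux with k horizontal walls in the first column at
heights 0 < h 1 < … < h k < n (with h 0 = 0 and h (k+1) = n) equals
(1/(2n+1))·∏_{i=1}^{k+1} C(2 h_i + 1, h_i − h_{i−1}). -/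
theorem stmt11 (n k : ℕ) (h : ℕ → ℕ)
    (hmono : ∀ i ≤ k, h i < h (i+1)) (h0 : h 0 = 0) (hend : h (k+1) = n) :
    (Nat.card {f : Fin n × Fin 2 ≃ Fin (2*n) //
      (∀ i : Fin n, f (i, 0) < f (i, 1)) ∧
      (∀ i j : Fin n, (i : ℕ) + 1 = (j : ℕ) → f (i, 1) < f (j, 1)) ∧
      (∀ i j : Fin n, (i : ℕ) + 1 = (j : ℕ) →
        (¬ ∃ a, 1 ≤ a ∧ a ≤ k ∧ h a = (j : ℕ)) → f (i, 0) < f (j, 0))} : ℚ)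
    = (1 / (2*n + 1)) *
      ∏ i ∈ Finset.range (k+1), ((2 * h (i+1) + 1).choose (h (i+1) - h i) : ℚ) := by
  set W : ℕ → Prop := fun j => ∃ a, 1 ≤ a ∧ a ≤ k ∧ h a = j with hWdef
  -- strict monotonicity of h on [0, k+1]
  have hsm : ∀ a b, a < b → b ≤ k+1 → h a < h b := by
    intro a b
    induction b with
    | zero => omega
    | succ b ihb =>
      intro hab hbk
      have hstep : h b < h (b+1) := hmono b (by omega)
      rcases Nat.lt_or_ge a b with hab' | hab'
      · have := ihb hab' (by omega); omega
      · have : a = b := by omega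
        subst this; omega
  have hmono' : ∀ a b, a ≤ b → b ≤ k+1 → h a ≤ h b := by
    intro a b hab hbk
    rcases Nat.eq_or_lt_of_le hab with rfl | hlt
    · exact le_rfl
    · exact le_of_lt (hsm a b hlt hbk)
  have hnpos : 0 < n := by
    have := hsm 0 (k+1) (by omega) le_rfl
    omega
  obtain ⟨N, rfl⟩ : ∃ N, n = N+1 := ⟨n-1, by omega⟩
  -- the main induction
  have main : ∀ m, ∀ a, a ≤ k → h a ≤ m → m < h (a+1) → ∀ x,
      SC W m x = (∏ i ∈ Finset.range a, sst (2*h i) (h (i+1) - h i) (2*h (i+1) - 1))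
        * sst (2*h a) (m+1-h a) x := by
    intro m
    induction m with
    | zero =>
      intro a ha h1 h2 x
      have ha0 : a = 0 := by
        by_contra hne
        have := hsm 0 a (by omega) (by omega)
        omega
      subst ha0
      rw [h0]
      simp only [Finset.range_zero, Finset.prod_empty, one_mul]
      show SC W 0 x = sst 0 1 x
      rw [SC_zero, sst_one]
    | succ m ih =>
      intro a ha h1 h2 x
      by_cases hcase : h a = m+1
      · -- wall at height m+1
        obtain ⟨b, rfl⟩ : ∃ b, a = b+1 := by
          refine ⟨a-1, ?_⟩
          by_contra hne
          have ha0 : a = 0 := by omega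
          rw [ha0, h0] at hcase
          omega
        have hW : W (m+1) := ⟨b+1, by omega, ha, hcase⟩
        have hb1 : h b ≤ m := by have := hsm b (b+1) (by omega) (by omega); omega
        have hb2 : m < h (b+1) := by omega
        have hprev := ih b (by omega) hb1 hb2 (2*m+1)
        rw [SC_succ_wall W m x hW, hprev]
        have e1 : m + 1 - h b = h (b+1) - h b := by omega
        have e2 : (2*m+1 : ℕ) = 2*h (b+1) - 1 := by omega
        rw [e1, e2, Finset.prod_range_succ]
        have e3 : m + 1 + 1 - h (b+1) = 1 := by omega
        rw [e3, sst_one]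
        have e4 : 2*h (b+1) + 1 = 2*m+3 := by omega
        rw [e4]
        ring
      · -- no wall at height m+1
        have h1' : h a ≤ m := by omega
        have hnW : ¬ W (m+1) := by
          rintro ⟨a', ha'1, ha'k, ha'e⟩
          have lt1 : h a < h a' := by omega
          have lt2 : h a' < h (a+1) := by omega
          have c1 : a < a' := by
            by_contra hc
            have : a' ≤ a := by omega
            have := hmono' a' a this (by omega)
            omega
          have c2 : a' < a+1 := by
            by_contra hc
            have : a+1 ≤ a' := by omega
            have := hmono' (a+1) a' this (by omega)
            omega
          omega
        rw [SC_succ_nowall W m x hnW]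
        rw [Finset.sum_congr rfl (fun y _ => ih a ha h1' (by omega) y), ← Finset.mul_sum]
        congr 1
        have e5 : m+1+1-h a = (m+1-h a)+1 := by omega
        rw [e5, sst_succ]
        have e6 : 2*h a + 2*(m+1-h a) + 1 = 2*m+3 := by omega
        rw [e6]
  -- identify the theorem's count with SC
  have hcard : Nat.card {f : Fin (N+1) × Fin 2 ≃ Fin (2*(N+1)) //
      (∀ i : Fin (N+1), f (i, 0) < f (i, 1)) ∧
      (∀ i j : Fin (N+1), (i : ℕ) + 1 = (j : ℕ) → f (i, 1) < f (j, 1)) ∧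
      (∀ i j : Fin (N+1), (i : ℕ) + 1 = (j : ℕ) →
        (¬ ∃ a, 1 ≤ a ∧ a ≤ k ∧ h a = (j : ℕ)) → f (i, 0) < f (j, 0))}
      = SC W N (2*N+1) := by
    apply Nat.card_congr
    apply Equiv.subtypeEquivRight
    intro f
    constructor
    · intro hf
      have hf' : IsTab W (N+1) f := hf
      exact ⟨hf', val_lt_top f hf'⟩
    · intro hf
      have hf' : IsTab W (N+1) f := hf.1
      exact hf'
  have hk1 : h k ≤ N := by have := hsm k (k+1) (by omega) le_rfl; omega
  have hmain := main N k le_rfl hk1 (by omega) (2*N+1)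
  have hfin : SC W N (2*N+1)
      = ∏ i ∈ Finset.range (k+1), sst (2*h i) (h (i+1) - h i) (2*h (i+1) - 1) := by
    rw [hmain, Finset.prod_range_succ]
    congr 2
    · omega
    · omega
  -- product identity
  have prodid : ∀ j, j ≤ k+1 →
      (2*h j + 1) * (∏ i ∈ Finset.range j, sst (2*h i) (h (i+1) - h i) (2*h (i+1) - 1))
      = ∏ i ∈ Finset.range j, Nat.choose (2*h (i+1) + 1) (h (i+1) - h i) := by
    intro j
    induction j with
    | zero => intro _; simp [h0]
    | succ j ihj =>
      intro hj
      rw [Finset.prod_range_succ, Finset.prod_range_succ]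
      have hle : h j ≤ h (j+1) := hmono' j (j+1) (by omega) (by omega)
      have hd : 1 ≤ h (j+1) - h j := by
        have := hsm j (j+1) (by omega) (by omega); omega
      have hL2 := sst_sat_eq (h j) (h (j+1) - h j) hd
      have hg1 : h j + (h (j+1) - h j) = h (j+1) := by omega
      rw [hg1] at hL2
      have hg2 : 2*h j + 2*(h (j+1) - h j) - 1 = 2*h (j+1) - 1 := by omega
      rw [hg2] at hL2
      calc (2*h (j+1) + 1) *
            ((∏ i ∈ Finset.range j, sst (2*h i) (h (i+1) - h i) (2*h (i+1) - 1))
              * sst (2*h j) (h (j+1) - h j) (2*h (j+1) - 1))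
          = ((2*h (j+1) + 1) * sst (2*h j) (h (j+1) - h j) (2*h (j+1) - 1))
              * (∏ i ∈ Finset.range j, sst (2*h i) (h (i+1) - h i) (2*h (i+1) - 1)) := by
            ring
        _ = ((2*h j + 1) * Nat.choose (2*h (j+1)+1) (h (j+1) - h j))
              * (∏ i ∈ Finset.range j, sst (2*h i) (h (i+1) - h i) (2*h (i+1) - 1)) := by
            rw [hL2]
        _ = ((2*h j + 1) *
              (∏ i ∈ Finset.range j, sst (2*h i) (h (i+1) - h i) (2*h (i+1) - 1)))
              * Nat.choose (2*h (j+1)+1) (h (j+1) - h j) := by ring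
        _ = (∏ i ∈ Finset.range j, Nat.choose (2*h (i+1) + 1) (h (i+1) - h i))
              * Nat.choose (2*h (j+1)+1) (h (j+1) - h j) := by rw [ihj (by omega)]
  have key : (2*(N+1)+1) * Nat.card {f : Fin (N+1) × Fin 2 ≃ Fin (2*(N+1)) //
      (∀ i : Fin (N+1), f (i, 0) < f (i, 1)) ∧
      (∀ i j : Fin (N+1), (i : ℕ) + 1 = (j : ℕ) → f (i, 1) < f (j, 1)) ∧
      (∀ i j : Fin (N+1), (i : ℕ) + 1 = (j : ℕ) →
        (¬ ∃ a, 1 ≤ a ∧ a ≤ k ∧ h a = (j : ℕ)) → f (i, 0) < f (j, 0))}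
      = ∏ i ∈ Finset.range (k+1), Nat.choose (2*h (i+1) + 1) (h (i+1) - h i) := by
    rw [hcard, hfin, ← prodid (k+1) le_rfl, hend]
  set T := Nat.card {f : Fin (N+1) × Fin 2 ≃ Fin (2*(N+1)) //
      (∀ i : Fin (N+1), f (i, 0) < f (i, 1)) ∧
      (∀ i j : Fin (N+1), (i : ℕ) + 1 = (j : ℕ) → f (i, 1) < f (j, 1)) ∧
      (∀ i j : Fin (N+1), (i : ℕ) + 1 = (j : ℕ) →
        (¬ ∃ a, 1 ≤ a ∧ a ≤ k ∧ h a = (j : ℕ)) → f (i, 0) < f (j, 0))} with hT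
  have keyQ : (2*((N:ℚ)+1)+1) * (T : ℚ)
      = ∏ i ∈ Finset.range (k+1), ((2 * h (i+1) + 1).choose (h (i+1) - h i) : ℚ) := by
    have := congrArg (fun t : ℕ => (t : ℚ)) key
    push_cast at this
    convert this using 2
  have hne : 2*((N:ℚ)+1)+1 ≠ 0 := by positivity
  push_cast
  rw [← keyQ]
  field_simp
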